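/- arXiv:2201.01189 — 2 statements merged into one kernel-verified Lean document; each statement's English description precedes it below -/
import Mathlib

section
/- The Appell $F_1$ double series $\sum_{m,n \geq 0} \frac{(a)_{m+n}(b)_m(b')_n}{(c)_{m+n}\, m!\, n!} x^m y^n$ converges absolutely whenever $\max(|x|, |y|) < 1$, where $a, b, b', c$ are complex numbers and $c$ is not a nonpositive integer. -/
open Finset in
lemma asc_eval_prod (z : ℂ) (n : ℕ) :
    (ascPochhammer ℂ n).eval z = ∏ j ∈ range n, (z + j) := by
  induction n with
  | zero => simp
  | succ n ih =>
      rw [ascPochhammer_succ_right, Polynomial.eval_mul, ih, prod_range_succ]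
      simp

open Finset in
lemma prod_le_const_mul_pow (u : ℕ → ℝ) (hu : ∀ j, 0 ≤ u j) {q : ℝ} (hq : 1 ≤ q)
    (N : ℕ) (hN : ∀ j, N ≤ j → u j ≤ q) (k : ℕ) :
    ∏ j ∈ range k, u j ≤ (∏ j ∈ range N, max (u j / q) 1) * q ^ k := by
  have hq0 : (0:ℝ) < q := lt_of_lt_of_le one_pos hq
  have hv1 : ∀ j, (1:ℝ) ≤ max (u j / q) 1 := fun j => le_max_right _ _
  have step1 : ∏ j ∈ range k, u j ≤ ∏ j ∈ range k, (q * max (u j / q) 1) := by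
    refine prod_le_prod (fun j _ => hu j) (fun j _ => ?_)
    calc u j = q * (u j / q) := by field_simp
    _ ≤ q * max (u j / q) 1 := by
        exact mul_le_mul_of_nonneg_left (le_max_left _ _) hq0.le
  have step2 : ∏ j ∈ range k, (q * max (u j / q) 1)
      = q ^ k * ∏ j ∈ range k, max (u j / q) 1 := by
    rw [prod_mul_distrib, prod_const, card_range]
  have step3 : ∏ j ∈ range k, max (u j / q) 1 ≤ ∏ j ∈ range N, max (u j / q) 1 := by
    have hvnn : ∀ j, (0:ℝ) ≤ max (u j / q) 1 := fun j => le_trans zero_le_one (hv1 j)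
    have hone : ∀ (s : Finset ℕ) (f : ℕ → ℝ), (∀ j, (1:ℝ) ≤ f j) → (1:ℝ) ≤ ∏ j ∈ s, f j := by
      intro s f hf
      calc (1:ℝ) = ∏ _j ∈ s, 1 := by simp
      _ ≤ ∏ j ∈ s, f j := prod_le_prod (fun j _ => zero_le_one) (fun j _ => hf j)
    rcases le_or_gt k N with h | h
    · have hkN : N = k + (N - k) := by omega
      rw [hkN, prod_range_add]
      exact le_mul_of_one_le_right (prod_nonneg fun j _ => hvnn j) (hone _ _ (fun j => hv1 _))
    · have hkN : k = N + (k - N) := by omega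
      rw [hkN, prod_range_add]
      have h3 : ∏ j ∈ range (k - N), max (u (N + j) / q) 1 = 1 := by
        refine prod_eq_one (fun j _ => ?_)
        rw [max_eq_right]
        exact div_le_one_of_le₀ (hN (N + j) (Nat.le_add_right _ _)) hq0.le
      rw [h3, mul_one]
  calc ∏ j ∈ range k, u j ≤ q ^ k * ∏ j ∈ range k, max (u j / q) 1 := step2 ▸ step1
  _ ≤ q ^ k * ∏ j ∈ range N, max (u j / q) 1 := by
      exact mul_le_mul_of_nonneg_left step3 (pow_nonneg hq0.le _)
  _ = _ := mul_comm _ _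

open Finset in
lemma pochhammer_div_fact_bound (z : ℂ) {q : ℝ} (hq : 1 < q) :
    ∃ C : ℝ, 0 < C ∧ ∀ k : ℕ,
      ‖(ascPochhammer ℂ k).eval z‖ / k.factorial ≤ C * q ^ k := by
  set u : ℕ → ℝ := fun j => ‖z + j‖ / (j + 1) with hu_def
  have hu : ∀ j, 0 ≤ u j := fun j => div_nonneg (norm_nonneg _) (by positivity)
  obtain ⟨N, hNge⟩ := exists_nat_ge (‖z‖ / (q - 1))
  have hq1 : (0:ℝ) < q - 1 := by linarith
  have hN : ∀ j, N ≤ j → u j ≤ q := by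
    intro j hj
    have hj' : ‖z‖ / (q - 1) ≤ (j : ℝ) :=
      le_trans hNge (Nat.cast_le.2 hj)
    have h1 : ‖z‖ ≤ (q - 1) * j := by
      rw [div_le_iff₀ hq1] at hj'
      linarith
    have h2 : ‖z + j‖ ≤ ‖z‖ + j := by
      simpa using (norm_add_le z (j:ℂ))
    rw [hu_def]
    rw [div_le_iff₀ (by positivity : (0:ℝ) < (j:ℝ) + 1)]
    nlinarith [norm_nonneg z]
  refine ⟨∏ j ∈ range N, max (u j / q) 1, prod_pos (fun j _ => lt_of_lt_of_le one_pos (le_max_right _ _)), fun k => ?_⟩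
  have key : ‖(ascPochhammer ℂ k).eval z‖ / k.factorial = ∏ j ∈ range k, u j := by
    rw [asc_eval_prod, norm_prod, ← prod_range_add_one_eq_factorial, hu_def]
    push_cast
    rw [← prod_div_distrib]
  rw [key]
  exact prod_le_const_mul_pow u hu hq.le N hN k

open Finset in
lemma pochhammer_ratio_bound (a c : ℂ) (hc : ∀ k : ℕ, c ≠ -(k : ℂ)) {q : ℝ} (hq : 1 < q) :
    ∃ C : ℝ, 0 < C ∧ ∀ k : ℕ,
      ‖(ascPochhammer ℂ k).eval a‖ / ‖(ascPochhammer ℂ k).eval c‖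
        ≤ C * q ^ k := by
  have hcj : ∀ j : ℕ, (0:ℝ) < ‖c + j‖ := by
    intro j
    rw [norm_pos_iff]
    intro h
    exact hc j (by linear_combination h)
  set u : ℕ → ℝ := fun j => ‖a + j‖ / ‖c + j‖ with hu_def
  have hu : ∀ j, 0 ≤ u j := fun j => div_nonneg (norm_nonneg _) (norm_nonneg _)
  obtain ⟨N, hNge⟩ := exists_nat_ge ((‖a‖ + q * ‖c‖) / (q - 1))
  have hq1 : (0:ℝ) < q - 1 := by linarith
  have hN : ∀ j, N ≤ j → u j ≤ q := by
    intro j hj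
    have hj' : (‖a‖ + q * ‖c‖) / (q - 1) ≤ (j : ℝ) :=
      le_trans hNge (Nat.cast_le.2 hj)
    have h1 : ‖a‖ + q * ‖c‖ ≤ (q - 1) * j := by
      rw [div_le_iff₀ hq1] at hj'
      linarith
    have h2 : ‖a + j‖ ≤ ‖a‖ + j := by
      simpa using (norm_add_le a (j:ℂ))
    have h3 : (j : ℝ) - ‖c‖ ≤ ‖c + j‖ := by
      have h := norm_add_le (c + j) (-c)
      rw [show (c + (j:ℂ)) + (-c) = (j:ℂ) by ring] at h
      simp only [norm_neg, Complex.norm_natCast] at h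
      linarith
    rw [hu_def]
    rw [div_le_iff₀ (hcj j)]
    nlinarith
  refine ⟨∏ j ∈ range N, max (u j / q) 1, prod_pos (fun j _ => lt_of_lt_of_le one_pos (le_max_right _ _)), fun k => ?_⟩
  have key : ‖(ascPochhammer ℂ k).eval a‖ / ‖(ascPochhammer ℂ k).eval c‖
      = ∏ j ∈ range k, u j := by
    rw [asc_eval_prod, asc_eval_prod, norm_prod, norm_prod, ← prod_div_distrib]
  rw [key]
  exact prod_le_const_mul_pow u hu hq.le N hN k

lemma mul5_le {a1 a2 a3 a4 a5 b1 b2 b3 b4 b5 : ℝ}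
    (ha2 : 0 ≤ a2) (ha3 : 0 ≤ a3) (ha4 : 0 ≤ a4) (ha5 : 0 ≤ a5)
    (hb1 : 0 ≤ b1) (hb2 : 0 ≤ b2) (hb3 : 0 ≤ b3) (hb4 : 0 ≤ b4)
    (h1 : a1 ≤ b1) (h2 : a2 ≤ b2) (h3 : a3 ≤ b3) (h4 : a4 ≤ b4) (h5 : a5 ≤ b5) :
    a1 * a2 * a3 * a4 * a5 ≤ b1 * b2 * b3 * b4 * b5 := by
  have t1 : a1 * a2 ≤ b1 * b2 := mul_le_mul h1 h2 ha2 hb1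
  have t2 : a1 * a2 * a3 ≤ b1 * b2 * b3 := mul_le_mul t1 h3 ha3 (mul_nonneg hb1 hb2)
  have t3 : a1 * a2 * a3 * a4 ≤ b1 * b2 * b3 * b4 :=
    mul_le_mul t2 h4 ha4 (mul_nonneg (mul_nonneg hb1 hb2) hb3)
  exact mul_le_mul t3 h5 ha5 (mul_nonneg (mul_nonneg (mul_nonneg hb1 hb2) hb3) hb4)

/-- The Appell `F₁` double series converges absolutely for `max (|x|, |y|) < 1`. -/
theorem appellF1_summable (a b b' c : ℂ) (hc : ∀ k : ℕ, c ≠ -(k : ℂ))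
    (x y : ℂ) (hxy : max ‖x‖ ‖y‖ < 1) :
    Summable (fun mn : ℕ × ℕ =>
      ‖(ascPochhammer ℂ (mn.1 + mn.2)).eval a * (ascPochhammer ℂ mn.1).eval b *
          (ascPochhammer ℂ mn.2).eval b' /
        ((ascPochhammer ℂ (mn.1 + mn.2)).eval c * (mn.1.factorial : ℂ) *
          (mn.2.factorial : ℂ)) * x ^ mn.1 * y ^ mn.2‖) := by
  set r : ℝ := max (max ‖x‖ ‖y‖) (1/2) with hr_def
  have hr0 : (0:ℝ) < r := lt_of_lt_of_le (by norm_num) (le_max_right _ _)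
  have hr1 : r < 1 := max_lt hxy (by norm_num)
  set s : ℝ := (1 + r) / 2 with hs_def
  have hs0 : (0:ℝ) < s := by positivity
  have hrs : r < s := by rw [hs_def]; linarith
  have hs1 : s < 1 := by rw [hs_def]; linarith
  set q : ℝ := Real.sqrt (s / r) with hq_def
  have hq : 1 < q := by
    rw [hq_def]
    rw [show (1:ℝ) = Real.sqrt 1 by simp]
    exact Real.sqrt_lt_sqrt (by norm_num) ((one_lt_div hr0).2 hrs)
  have hq0 : (0:ℝ) < q := lt_trans one_pos hq
  have hq2 : q ^ 2 * r = s := by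
    rw [hq_def, Real.sq_sqrt (by positivity : (0:ℝ) ≤ s / r)]
    field_simp
  obtain ⟨C1, hC1, hC1k⟩ := pochhammer_ratio_bound a c hc hq
  obtain ⟨C2, hC2, hC2k⟩ := pochhammer_div_fact_bound b hq
  obtain ⟨C3, hC3, hC3k⟩ := pochhammer_div_fact_bound b' hq
  have hgs : Summable (fun mn : ℕ × ℕ => C1 * C2 * C3 * (s ^ mn.1 * s ^ mn.2)) := by
    refine Summable.mul_left _ ?_
    exact Summable.mul_of_nonneg (summable_geometric_of_lt_one hs0.le hs1)
      (summable_geometric_of_lt_one hs0.le hs1)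
      (fun m => pow_nonneg hs0.le m) (fun n => pow_nonneg hs0.le n)
  refine Summable.of_nonneg_of_le (fun mn => norm_nonneg _) (fun mn => ?_) hgs
  obtain ⟨m, n⟩ := mn
  have heq : ‖(ascPochhammer ℂ (m + n)).eval a * (ascPochhammer ℂ m).eval b *
          (ascPochhammer ℂ n).eval b' /
        ((ascPochhammer ℂ (m + n)).eval c * (m.factorial : ℂ) * (n.factorial : ℂ))
        * x ^ m * y ^ n‖
      = (‖(ascPochhammer ℂ (m + n)).eval a‖ /
          ‖(ascPochhammer ℂ (m + n)).eval c‖) *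
        (‖(ascPochhammer ℂ m).eval b‖ / m.factorial) *
        (‖(ascPochhammer ℂ n).eval b'‖ / n.factorial) *
        ‖x‖ ^ m * ‖y‖ ^ n := by
    simp only [norm_mul, norm_div, norm_pow, Complex.norm_natCast]
    ring
  rw [heq]
  have hx : ‖x‖ ≤ r := le_trans (le_max_left _ _) (le_max_left _ _)
  have hy : ‖y‖ ≤ r := le_trans (le_max_right _ _) (le_max_left _ _)
  calc (‖(ascPochhammer ℂ (m + n)).eval a‖ /
          ‖(ascPochhammer ℂ (m + n)).eval c‖) *
        (‖(ascPochhammer ℂ m).eval b‖ / m.factorial) *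
        (‖(ascPochhammer ℂ n).eval b'‖ / n.factorial) *
        ‖x‖ ^ m * ‖y‖ ^ n
      ≤ (C1 * q ^ (m + n)) * (C2 * q ^ m) * (C3 * q ^ n) * r ^ m * r ^ n := by
        refine mul5_le ?_ ?_ ?_ ?_ ?_ ?_ ?_ ?_ (hC1k _) (hC2k _) (hC3k _)
          (pow_le_pow_left₀ (norm_nonneg _) hx m)
          (pow_le_pow_left₀ (norm_nonneg _) hy n)
        · exact div_nonneg (norm_nonneg _) (Nat.cast_nonneg _)
        · exact div_nonneg (norm_nonneg _) (Nat.cast_nonneg _)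
        · exact pow_nonneg (norm_nonneg _) m
        · exact pow_nonneg (norm_nonneg _) n
        · exact mul_nonneg hC1.le (pow_nonneg hq0.le _)
        · exact mul_nonneg hC2.le (pow_nonneg hq0.le _)
        · exact mul_nonneg hC3.le (pow_nonneg hq0.le _)
        · exact pow_nonneg hr0.le m
    _ = C1 * C2 * C3 * (s ^ m * s ^ n) := by
        rw [← hq2]
        ring
end

section
/- Pfaff transformation of the Gauss hypergeometric function: for complex $a, b, c$ with $c$ not a nonpositive integer, and real $z$ with $0 \leq z < 1/2$ (so that $|z/(z-1)| < 1$), one has ${}_2F_1(a,b;c;z) = (1-z)^{-a}\, {}_2F_1\left(a, c-b; c; \frac{z}{z-1}\right)$. -/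
open Filter Finset Complex Set Topology

noncomputable def pc (n : ℕ) (x : ℂ) : ℂ := (ascPochhammer ℂ n).eval x

lemma pc_zero (x : ℂ) : pc 0 x = 1 := by simp [pc]

lemma pc_succ (n : ℕ) (x : ℂ) : pc (n+1) x = pc n x * (x + n) := by
  simp [pc, ascPochhammer_succ_eval]

lemma pc_succ' (n : ℕ) (x : ℂ) : pc (n+1) x = x * pc n (x+1) := by
  simp only [pc, ascPochhammer_succ_left, Polynomial.eval_mul, Polynomial.eval_X,
    Polynomial.eval_comp, Polynomial.eval_add, Polynomial.eval_one]

lemma pc_add (n m : ℕ) (x : ℂ) : pc (n+m) x = pc n x * pc m (x + n) := by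
  have := congrArg (Polynomial.eval x) (ascPochhammer_mul ℂ n m)
  simp only [Polynomial.eval_mul, Polynomial.eval_comp, Polynomial.eval_add,
    Polynomial.eval_X, Polynomial.eval_natCast] at this
  rw [pc, pc, pc, ← this]

lemma pc_ne {c : ℂ} (hc : ∀ k : ℕ, c ≠ -(k : ℂ)) (s : ℕ) : pc s c ≠ 0 := by
  induction s with
  | zero => simp [pc_zero]
  | succ n ih =>
      rw [pc_succ]
      refine mul_ne_zero ih ?_
      intro h
      exact hc n (by linear_combination h)

lemma vdm (n : ℕ) : ∀ x c' : ℂ,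
    ∑ s ∈ range (n+1), (-1:ℂ)^s * (n.choose s : ℂ) * pc s x * pc (n - s) (c' + s)
      = pc n (c' - x) := by
  induction n with
  | zero => intro x c'; simp [pc_zero]
  | succ n ih =>
      intro x c'
      rw [Finset.sum_range_succ']
      have h0 : (-1:ℂ)^0 * ((n+1).choose 0 : ℂ) * pc 0 x * pc (n + 1 - 0) (c' + (0:ℕ))
          = pc (n+1) c' := by simp [pc_zero]
      rw [h0]
      have hsplit : ∀ s ∈ range (n+1),
          (-1:ℂ)^(s+1) * ((n+1).choose (s+1) : ℂ) * pc (s+1) x * pc (n + 1 - (s+1)) (c' + (s+1:ℕ))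
          = -((-1:ℂ)^s * (n.choose s : ℂ) * (pc s x * (x+s)) * pc (n - s) ((c'+1) + s))
            + (-1:ℂ)^(s+1) * (n.choose (s+1) : ℂ) * pc (s+1) x * pc (n - s) (c' + (s+1:ℕ)) := by
        intro s hs
        have h1 : (c' + ((s+1:ℕ)):ℂ) = (c' + 1) + (s:ℕ) := by push_cast; ring
        rw [Nat.choose_succ_succ, Nat.succ_sub_succ, pc_succ, h1]
        push_cast
        ring
      rw [Finset.sum_congr rfl hsplit, Finset.sum_add_distrib]
      -- second piece plus pc (n+1) c' equals Σ1
      have hS1 : ∑ s ∈ range (n+1),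
            (-1:ℂ)^(s+1) * (n.choose (s+1) : ℂ) * pc (s+1) x * pc (n - s) (c' + (s+1:ℕ))
            + pc (n+1) c'
          = ∑ s ∈ range (n+1), (-1:ℂ)^s * (n.choose s : ℂ) * pc s x * pc (n + 1 - s) (c' + s) := by
        conv_rhs => rw [Finset.sum_range_succ']
        rw [Finset.sum_range_succ, Nat.choose_succ_self]
        simp only [Nat.cast_zero, mul_zero, zero_mul, add_zero]
        congr 1
        · exact Finset.sum_congr rfl fun k hk => by rw [Nat.succ_sub_succ]
        · simp [pc_zero]
      rw [add_assoc, hS1]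
      -- now combine the two sums termwise
      have hcomb : ∀ s ∈ range (n+1),
          -((-1:ℂ)^s * (n.choose s : ℂ) * (pc s x * (x+s)) * pc (n - s) ((c'+1) + s))
            + (-1:ℂ)^s * (n.choose s : ℂ) * pc s x * pc (n + 1 - s) (c' + s)
          = (c' - x) * ((-1:ℂ)^s * (n.choose s : ℂ) * pc s x * pc (n - s) ((c'+1) + s)) := by
        intro s hs
        have hsn : s ≤ n := Nat.lt_succ_iff.mp (Finset.mem_range.mp hs)
        rw [show n + 1 - s = (n - s) + 1 from by omega, pc_succ']
        have : (c' + s) + 1 = (c' + 1) + (s:ℂ) := by ring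
        rw [this]
        ring
      rw [← Finset.sum_add_distrib, Finset.sum_congr rfl hcomb, ← Finset.mul_sum, ih x (c'+1)]
      rw [pc_succ']
      ring_nf

-- the coefficient identity
lemma coeff_id (a b c : ℂ) (hc : ∀ k : ℕ, c ≠ -(k : ℂ)) (n : ℕ) :
    ∑ s ∈ range (n+1),
        pc s a * pc s (c-b) / (pc s c * (s.factorial : ℂ)) * (-1:ℂ)^s
          * pc (n-s) (a + s) / ((n-s).factorial : ℂ)
      = pc n a * pc n b / (pc n c * (n.factorial : ℂ)) := by
  have hpcn : pc n c ≠ 0 := pc_ne hc n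
  have hfn : ((n.factorial : ℂ)) ≠ 0 := Nat.cast_ne_zero.mpr n.factorial_ne_zero
  rw [eq_div_iff (mul_ne_zero hpcn hfn), Finset.sum_mul]
  have hterm : ∀ s ∈ range (n+1),
      pc s a * pc s (c-b) / (pc s c * (s.factorial : ℂ)) * (-1:ℂ)^s
          * pc (n-s) (a + s) / ((n-s).factorial : ℂ) * (pc n c * (n.factorial : ℂ))
      = pc n a * ((-1:ℂ)^s * (n.choose s : ℂ) * pc s (c-b) * pc (n - s) (c + s)) := by
    intro s hs
    have hsn : s ≤ n := Nat.lt_succ_iff.mp (Finset.mem_range.mp hs)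
    have hA : pc n a = pc s a * pc (n-s) (a + s) := by
      rw [← pc_add s (n-s) a]; congr 1; omega
    have hC : pc n c = pc s c * pc (n-s) (c + s) := by
      rw [← pc_add s (n-s) c]; congr 1; omega
    have hF : (n.factorial : ℂ) = (n.choose s : ℂ) * (s.factorial : ℂ) * ((n-s).factorial : ℂ) := by
      rw [← Nat.cast_mul, ← Nat.cast_mul, Nat.choose_mul_factorial_mul_factorial hsn]
    have hpcs : pc s c ≠ 0 := pc_ne hc s
    have hfs : ((s.factorial : ℂ)) ≠ 0 := Nat.cast_ne_zero.mpr s.factorial_ne_zero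
    have hfns : (((n-s).factorial : ℂ)) ≠ 0 := Nat.cast_ne_zero.mpr (n-s).factorial_ne_zero
    rw [hA, hC, hF]
    field_simp
  rw [Finset.sum_congr rfl hterm, ← Finset.mul_sum, vdm n (c - b) c]
  rw [show c - (c - b) = b by ring]

/-- ratio of norms tends to 1 -/
lemma tendsto_norm_ratio (x y : ℂ) :
    Tendsto (fun m : ℕ => ‖x + (m:ℂ)‖ / ‖y + (m:ℂ)‖) atTop (𝓝 1) := by
  have h0 : Tendsto (fun m : ℕ => ((m:ℂ))⁻¹) atTop (𝓝 0) := by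
    rw [tendsto_zero_iff_norm_tendsto_zero]
    simp only [norm_inv, Complex.norm_natCast]
    exact tendsto_inv_atTop_zero.comp tendsto_natCast_atTop_atTop
  have hnum : Tendsto (fun m : ℕ => x * ((m:ℂ))⁻¹ + 1) atTop (𝓝 1) := by
    have := (h0.const_mul x).add_const 1
    simpa using this
  have hden : Tendsto (fun m : ℕ => y * ((m:ℂ))⁻¹ + 1) atTop (𝓝 1) := by
    have := (h0.const_mul y).add_const 1
    simpa using this
  have hdiv : Tendsto (fun m : ℕ => (x + m) / (y + m)) atTop (𝓝 1) := by
    have h := hnum.div hden one_ne_zero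
    rw [div_one] at h
    apply h.congr'
    filter_upwards [eventually_ge_atTop 1] with m hm
    simp only [Pi.div_apply]
    have hm0 : ((m:ℂ)) ≠ 0 := by
      simp only [ne_eq, Nat.cast_eq_zero]; omega
    have h1 : x * ((m:ℂ))⁻¹ + 1 = (x + m) * ((m:ℂ))⁻¹ := by field_simp
    have h2 : y * ((m:ℂ))⁻¹ + 1 = (y + m) * ((m:ℂ))⁻¹ := by field_simp
    rw [h1, h2, mul_div_mul_right _ _ (inv_ne_zero hm0)]
  have := hdiv.norm
  simp only [norm_one] at this
  apply this.congr
  intro m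
  rw [norm_div]

/-- ratio test with varying ratio -/
lemma summable_ratio {f g : ℕ → ℝ} {L : ℝ} (hf : ∀ m, 0 ≤ f m) (hL : L < 1)
    (hg : Tendsto g atTop (𝓝 L)) (h : ∀ᶠ m in atTop, f (m+1) ≤ g m * f m) :
    Summable f := by
  have hmax : max L 0 < 1 := max_lt hL one_pos
  have hr1 : (max L 0 + 1)/2 < 1 := by linarith
  have hLr : L < (max L 0 + 1)/2 := by
    have : L ≤ max L 0 := le_max_left _ _
    linarith
  apply summable_of_ratio_norm_eventually_le hr1
  filter_upwards [h, hg.eventually_lt_const hLr] with m h1 h2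
  rw [Real.norm_of_nonneg (hf _), Real.norm_of_nonneg (hf _)]
  calc f (m+1) ≤ g m * f m := h1
    _ ≤ (max L 0 + 1)/2 * f m := mul_le_mul_of_nonneg_right h2.le (hf m)

lemma pr_nonneg {y : ℝ} (hy : 0 ≤ y) (n : ℕ) : 0 ≤ (ascPochhammer ℝ n).eval y := by
  induction n with
  | zero => simp
  | succ n ih =>
      rw [ascPochhammer_succ_eval]
      exact mul_nonneg ih (by positivity)

lemma norm_pc_le {x : ℂ} {y : ℝ} (h : ‖x‖ ≤ y) (n : ℕ) :
    ‖pc n x‖ ≤ (ascPochhammer ℝ n).eval y := by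
  induction n with
  | zero => simp [pc_zero]
  | succ n ih =>
      rw [pc_succ, ascPochhammer_succ_eval]
      rw [norm_mul]
      have hxy : ‖x + (n:ℂ)‖ ≤ y + n := by
        calc ‖x + (n:ℂ)‖ ≤ ‖x‖ + ‖(n:ℂ)‖ := norm_add_le _ _
          _ = ‖x‖ + n := by rw [Complex.norm_natCast]
          _ ≤ y + n := by linarith
      exact mul_le_mul ih hxy (norm_nonneg _) (pr_nonneg (le_trans (norm_nonneg x) h) n)

noncomputable def qq (r : ℂ) (m : ℕ) : ℂ := pc m r / (m.factorial : ℂ)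

lemma qq_zero (r : ℂ) : qq r 0 = 1 := by simp [qq, pc_zero]

lemma qq_succ (r : ℂ) (m : ℕ) : qq r (m+1) = qq r m * ((r + m) / ((m:ℂ)+1)) := by
  have hf : ((m.factorial : ℂ)) ≠ 0 := Nat.cast_ne_zero.mpr m.factorial_ne_zero
  have hm : ((m:ℂ)+1) ≠ 0 := by
    have h1 : (((m+1:ℕ)):ℂ) ≠ 0 := Nat.cast_ne_zero.mpr (Nat.succ_ne_zero m)
    push_cast at h1
    exact h1
  rw [qq, qq, pc_succ, Nat.factorial_succ]
  push_cast
  rw [div_mul_div_comm]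
  ring

lemma norm_qq_succ (r : ℂ) (m : ℕ) :
    ‖qq r (m+1)‖ = ‖qq r m‖ * (‖r + m‖ / ((m:ℝ)+1)) := by
  rw [qq_succ, norm_mul, norm_div]
  congr 2
  have : ((m:ℂ)+1) = (((m+1:ℕ)):ℂ) := by push_cast; ring
  rw [this, Complex.norm_natCast]
  push_cast
  ring

/-- summability of the derivative-bound series -/
lemma summable_deriv_bound (r : ℂ) :
    Summable (fun m : ℕ => ‖qq r m‖ * m * ((4/5:ℝ)^m * (5/4))) := by
  apply summable_ratio (g := fun m => ‖r + m‖ / ‖(0:ℂ) + m‖ * (4/5))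
    (L := 1 * (4/5)) (fun m => by positivity) (by norm_num)
    (((tendsto_norm_ratio r 0).mul_const (4/5)))
  filter_upwards [eventually_ge_atTop 1] with m hm
  have hm0 : (0:ℝ) < m := by exact_mod_cast hm
  have hnm : ‖(0:ℂ) + (m:ℂ)‖ = (m:ℝ) := by
    rw [zero_add, Complex.norm_natCast]
  rw [norm_qq_succ, hnm]
  push_cast
  apply le_of_eq
  have h1 : ((m:ℝ)) ≠ 0 := hm0.ne'
  have h2 : ((m:ℝ)+1) ≠ 0 := by positivity
  field_simp
  ring

set_option maxHeartbeats 2000000 in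
lemma binomial_hasSum (r : ℂ) {t : ℝ} (ht0 : 0 ≤ t) (ht1 : t < 3/4) :
    HasSum (fun m : ℕ => qq r m * (t:ℂ)^m) ((1 - (t:ℂ)) ^ (-r)) := by
  set s : Set ℝ := Ioo (-(4/5) : ℝ) (4/5) with hs
  have hso : IsOpen s := isOpen_Ioo
  have hsc : IsPreconnected s := isPreconnected_Ioo
  set u : ℕ → ℝ := fun m => ‖qq r m‖ * m * ((4/5:ℝ)^m * (5/4)) with hu
  have hus : Summable u := summable_deriv_bound r
  have h0mem : (0:ℝ) ∈ s := by constructor <;> norm_num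
  have htmem : t ∈ s := by constructor <;> [linarith; linarith]
  have hderiv : ∀ (m : ℕ) (y : ℝ), HasDerivAt (fun t : ℝ => qq r m * (t:ℂ)^m)
      (qq r m * (m * (y:ℂ)^(m-1))) y := by
    intro m y
    exact ((hasDerivAt_pow m ((y:ℝ):ℂ)).comp_ofReal).const_mul (qq r m)
  have hbound : ∀ (m : ℕ) (y : ℝ), y ∈ s → ‖qq r m * (m * (y:ℂ)^(m-1))‖ ≤ u m := by
    intro m y hy
    have hy45 : |y| ≤ 4/5 := by rw [abs_le]; exact ⟨hy.1.le, hy.2.le⟩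
    rw [norm_mul, norm_mul, Complex.norm_natCast, norm_pow, Complex.norm_real,
      Real.norm_eq_abs]
    have hpow : |y|^(m-1) ≤ (4/5:ℝ)^m * (5/4) := by
      rcases m with _ | m
      · simp; norm_num
      · rw [Nat.succ_sub_one]
        calc |y|^m ≤ (4/5:ℝ)^m := pow_le_pow_left₀ (abs_nonneg y) hy45 m
          _ ≤ (4/5:ℝ)^(m+1) * (5/4) := le_of_eq (by rw [pow_succ]; ring)
    have h2 : ‖qq r m‖ * ↑m * |y|^(m-1) ≤ ‖qq r m‖ * ↑m * ((4/5:ℝ)^m * (5/4)) :=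
      mul_le_mul_of_nonneg_left hpow (by positivity)
    rw [← mul_assoc]
    exact h2
  have hsum0 : Summable (fun m : ℕ => qq r m * (((0:ℝ)):ℂ)^m) := by
    apply summable_of_ne_finset_zero (s := ({0} : Finset ℕ))
    intro m hm
    simp only [Finset.mem_singleton] at hm
    simp [zero_pow hm]
  have hF : ∀ y ∈ s, HasDerivAt (fun t : ℝ => ∑' m, qq r m * (t:ℂ)^m)
      (∑' m, qq r m * (m * (y:ℂ)^(m-1))) y := fun y hy =>
    hasDerivAt_tsum_of_isPreconnected hus hso hsc (fun m y _ => hderiv m y) hbound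
      h0mem hsum0 hy
  have hsumf : ∀ y ∈ s, Summable (fun m : ℕ => qq r m * ((y:ℝ):ℂ)^m) := fun y hy =>
    summable_of_summable_hasDerivAt_of_isPreconnected hus hso hsc
      (fun m y _ => hderiv m y) hbound h0mem hsum0 hy
  set f : ℝ → ℂ := fun t => ∑' m, qq r m * (t:ℂ)^m with hfdef
  have hsumD : ∀ y : ℝ, y ∈ s → Summable (fun m => qq r m * (m * (y:ℂ)^(m-1))) :=
    fun y hy => Summable.of_norm_bounded hus (fun m => hbound m y hy)
  have hODE : ∀ y : ℝ, y ∈ s →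
      (∑' m, qq r m * (m * (y:ℂ)^(m-1))) * (1 - (y:ℂ)) = r * f y := by
    intro y hy
    have hsD := hsumD y hy
    have hsf := hsumf y hy
    have hsfm : Summable (fun m => qq r m * m * (y:ℂ)^m) := by
      apply (hsD.mul_right (y:ℂ)).congr
      intro m
      rcases m with _ | m
      · simp
      · rw [Nat.succ_sub_one]
        push_cast
        ring
    have hshift : (∑' m, qq r m * (m * (y:ℂ)^(m-1)))
        = ∑' m, qq r (m+1) * (((m:ℂ)+1) * (y:ℂ)^m) := by
      rw [Summable.tsum_eq_zero_add hsD]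
      simp only [Nat.cast_zero, zero_mul, mul_zero, zero_add]
      apply tsum_congr; intro m
      rw [Nat.succ_sub_one]
      push_cast
      ring
    have hterm : ∀ m : ℕ, qq r (m+1) * (((m:ℂ)+1) * (y:ℂ)^m)
        = r * (qq r m * (y:ℂ)^m) + qq r m * m * (y:ℂ)^m := by
      intro m
      have hm : ((m:ℂ)+1) ≠ 0 := by
        have h1 : (((m+1:ℕ)):ℂ) ≠ 0 := Nat.cast_ne_zero.mpr (Nat.succ_ne_zero m)
        push_cast at h1
        exact h1
      rw [qq_succ]
      field_simp
    have h1 : ∑' m, qq r m * m * (y:ℂ)^m = (y:ℂ) * ∑' m, qq r m * (m * (y:ℂ)^(m-1)) := by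
      rw [← tsum_mul_left]
      apply tsum_congr; intro m
      rcases m with _ | m
      · simp
      · rw [Nat.succ_sub_one]
        push_cast
        ring
    have h2 : (∑' m, qq r m * (m * (y:ℂ)^(m-1)))
        = r * f y + (y:ℂ) * ∑' m, qq r m * (m * (y:ℂ)^(m-1)) := by
      calc (∑' m, qq r m * (m * (y:ℂ)^(m-1)))
          = ∑' m, qq r (m+1) * (((m:ℂ)+1) * (y:ℂ)^m) := hshift
        _ = ∑' m, (r * (qq r m * (y:ℂ)^m) + qq r m * m * (y:ℂ)^m) := tsum_congr hterm
        _ = (∑' m, r * (qq r m * (y:ℂ)^m)) + ∑' m, qq r m * m * (y:ℂ)^m :=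
            (hsf.mul_left r).tsum_add hsfm
        _ = r * f y + (y:ℂ) * ∑' m, qq r m * (m * (y:ℂ)^(m-1)) := by
            rw [tsum_mul_left, h1]
    linear_combination h2
  have hFzero : ∀ y ∈ s, HasDerivAt (fun t : ℝ => f t * (1 - (t:ℂ))^r) 0 y := by
    intro y hy
    have hy1 : (0:ℝ) < 1 - y := by linarith [hy.2]
    have hne : (1 - (y:ℂ)) ≠ 0 := by
      have h1 : ((1 - y : ℝ):ℂ) ≠ 0 := Complex.ofReal_ne_zero.mpr (by linarith)
      push_cast at h1
      exact h1
    have hslit : (1 - (y:ℂ)) ∈ Complex.slitPlane := by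
      rw [Complex.mem_slitPlane_iff]
      left
      simp only [Complex.sub_re, Complex.one_re, Complex.ofReal_re]
      linarith
    have hinner : HasDerivAt (fun t : ℝ => 1 - (t:ℂ)) (-1) y :=
      ((hasDerivAt_id ((y:ℝ):ℂ)).const_sub 1).comp_ofReal
    have hcpow := (Complex.hasStrictDerivAt_cpow_const (c := r) hslit).hasDerivAt.comp y hinner
    have hprod := (hF y hy).mul hcpow
    have hpow : (1 - (y:ℂ))^r = (1 - (y:ℂ))^(r-1) * (1 - (y:ℂ)) := by
      conv_lhs => rw [show r = (r-1)+1 by ring]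
      rw [Complex.cpow_add _ _ hne, Complex.cpow_one]
    have hO := hODE y hy
    refine hprod.congr_deriv (Eq.symm ?_)
    simp only [Function.comp_apply]
    rw [hpow]
    linear_combination (-(1 - (y:ℂ))^(r-1)) * hO
  have hsub : Icc (0:ℝ) t ⊆ s := fun x hx => ⟨by linarith [hx.1], by linarith [hx.2]⟩
  have hconst := constant_of_has_deriv_right_zero (f := fun t : ℝ => f t * (1 - (t:ℂ))^r)
    (fun x hx => ((hFzero x (hsub hx)).continuousAt).continuousWithinAt)
    (fun x hx => ((hFzero x (hsub (Ico_subset_Icc_self hx))).hasDerivWithinAt))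
  have hFt : f t * (1 - (t:ℂ))^r = f 0 * (1 - ((0:ℝ):ℂ))^r :=
    hconst t (right_mem_Icc.mpr ht0)
  have hf0 : f 0 = 1 := by
    show ∑' m, qq r m * (((0:ℝ)):ℂ)^m = 1
    rw [tsum_eq_single 0 (fun m hm => by simp [zero_pow hm])]
    simp [qq_zero]
  have hF0 : f 0 * (1 - ((0:ℝ):ℂ))^r = 1 := by
    rw [hf0, one_mul]
    norm_num
  rw [hF0] at hFt
  have hne : (1 - (t:ℂ)) ≠ 0 := by
    have h1 : ((1 - t : ℝ):ℂ) ≠ 0 := Complex.ofReal_ne_zero.mpr (by linarith)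
    push_cast at h1
    exact h1
  have hpne : (1 - (t:ℂ))^r ≠ 0 := by
    intro h
    rw [Complex.cpow_eq_zero_iff] at h
    exact hne h.1
  have hftval : f t = (1 - (t:ℂ))^(-r) := by
    rw [Complex.cpow_neg]
    calc f t = f t * ((1 - (t:ℂ))^r * ((1 - (t:ℂ))^r)⁻¹) := by
          rw [mul_inv_cancel₀ hpne, mul_one]
      _ = (f t * (1 - (t:ℂ))^r) * ((1 - (t:ℂ))^r)⁻¹ := by ring
      _ = ((1 - (t:ℂ))^r)⁻¹ := by rw [hFt, one_mul]
  rw [← hftval]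
  exact (hsumf t htmem).hasSum

lemma pc_ofReal (m : ℕ) (r : ℝ) : pc m ((r:ℝ):ℂ) = (((ascPochhammer ℝ m).eval r : ℝ) : ℂ) := by
  induction m with
  | zero => simp [pc_zero]
  | succ n ih =>
      rw [pc_succ, ascPochhammer_succ_eval, ih]
      push_cast
      ring

lemma binomial_hasSum_real (r : ℝ) {t : ℝ} (ht0 : 0 ≤ t) (ht1 : t < 3/4) :
    HasSum (fun m : ℕ => (ascPochhammer ℝ m).eval r / (m.factorial : ℝ) * t^m)
      ((1 - t) ^ (-r)) := by
  have h := binomial_hasSum ((r:ℝ):ℂ) ht0 ht1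
  have hterm : (fun m : ℕ => qq ((r:ℝ):ℂ) m * (t:ℂ)^m)
      = (fun m : ℕ => (((ascPochhammer ℝ m).eval r / (m.factorial : ℝ) * t^m : ℝ) : ℂ)) := by
    funext m
    rw [qq, pc_ofReal]
    push_cast
    ring
  rw [hterm] at h
  have hval : (1 - (t:ℂ)) ^ (-((r:ℝ):ℂ)) = (((1 - t) ^ (-r) : ℝ) : ℂ) := by
    rw [Complex.ofReal_cpow (by linarith : (0:ℝ) ≤ 1 - t) (-r)]
    push_cast
    rfl
  rw [hval] at h
  exact Complex.hasSum_ofReal.mp h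

lemma tsum_eq_tsum_antidiagonal {f : ℕ × ℕ → ℂ} (hf : Summable f) :
    ∑' p : ℕ × ℕ, f p = ∑' n : ℕ, ∑ kl ∈ Finset.HasAntidiagonal.antidiagonal n, f kl := by
  conv_rhs => congr; ext; rw [← Finset.sum_finset_coe, ← tsum_fintype (L := .unconditional _)]
  rw [← Finset.HasAntidiagonal.sigmaAntidiagonalEquivProd.tsum_eq f]
  exact (Finset.HasAntidiagonal.sigmaAntidiagonalEquivProd.summable_iff.mpr hf).tsum_sigma'
    (fun n => (hasSum_fintype _).summable)

set_option maxHeartbeats 1000000 in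
/-- Pfaff transformation of the Gauss hypergeometric series, for `0 ≤ z < 1/2` real. -/
theorem gauss_2F1_pfaff (a b c : ℂ) (hc : ∀ k : ℕ, c ≠ -(k : ℂ))
    (z : ℝ) (hz0 : 0 ≤ z) (hz1 : z < 1 / 2) :
    (∑' s : ℕ, (ascPochhammer ℂ s).eval a * (ascPochhammer ℂ s).eval b /
        ((ascPochhammer ℂ s).eval c * (s.factorial : ℂ)) * (z : ℂ) ^ s) =
      ((1 : ℂ) - (z : ℂ)) ^ (-a) *
        ∑' s : ℕ, (ascPochhammer ℂ s).eval a * (ascPochhammer ℂ s).eval (c - b) /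
          ((ascPochhammer ℂ s).eval c * (s.factorial : ℂ)) *
            ((z / (z - 1) : ℝ) : ℂ) ^ s := by
  have hz34 : z < 3/4 := by linarith
  have h1z : (0:ℝ) < 1 - z := by linarith
  have hne : ((1:ℂ) - (z:ℂ)) ≠ 0 := by
    have h1 : ((1 - z : ℝ):ℂ) ≠ 0 := Complex.ofReal_ne_zero.mpr (by linarith)
    push_cast at h1; exact h1
  set A : ℕ → ℂ := fun s => pc s a * pc s (c-b) / (pc s c * (s.factorial : ℂ)) with hA
  set T : ℕ × ℕ → ℂ :=
    fun p => A p.1 * (-1:ℂ)^p.1 * (z:ℂ)^p.1 * (qq (a + p.1) p.2 * (z:ℂ)^p.2) with hT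
  have hwc : ((z / (z - 1) : ℝ) : ℂ) = -(z:ℂ) * ((1:ℂ) - (z:ℂ))⁻¹ := by
    push_cast
    rw [show (z:ℂ) - 1 = -((1:ℂ) - (z:ℂ)) by ring, div_eq_mul_inv, inv_neg]
    ring
  have hw_pow : ∀ s : ℕ, ((z / (z - 1) : ℝ) : ℂ)^s
      = (-1:ℂ)^s * (z:ℂ)^s * (((1:ℂ) - (z:ℂ))^s)⁻¹ := by
    intro s
    rw [hwc, mul_pow, inv_pow, neg_pow]
  have hClaim1 : ∀ s : ℕ, HasSum (fun m => T (s, m))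
      (((1:ℂ) - (z:ℂ)) ^ (-a) * (A s * ((z / (z - 1) : ℝ) : ℂ)^s)) := by
    intro s
    have hb := (binomial_hasSum (a + (s:ℂ)) hz0 hz34).mul_left (A s * (-1:ℂ)^s * (z:ℂ)^s)
    have hval : A s * (-1:ℂ)^s * (z:ℂ)^s * ((1 - (z:ℂ)) ^ (-(a + (s:ℂ))))
        = ((1:ℂ) - (z:ℂ)) ^ (-a) * (A s * ((z / (z - 1) : ℝ) : ℂ)^s) := by
      rw [hw_pow s]
      rw [show -(a + (s:ℂ)) = -a + -(s:ℂ) by ring, Complex.cpow_add _ _ hne,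
        Complex.cpow_neg, Complex.cpow_neg, Complex.cpow_natCast]
      ring
    rw [hval] at hb
    exact hb
  have hmaj : ∀ s : ℕ, Summable (fun m : ℕ =>
      (‖A s‖ * z^s) * ((ascPochhammer ℝ m).eval (‖a‖ + s) / (m.factorial : ℝ) * z^m)) :=
    fun s => ((binomial_hasSum_real (‖a‖ + s) hz0 hz34).summable.mul_left _)
  have hTnorm_le : ∀ (s m : ℕ), ‖T (s, m)‖ ≤
      (‖A s‖ * z^s) * ((ascPochhammer ℝ m).eval (‖a‖ + s) / (m.factorial : ℝ) * z^m) := by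
    intro s m
    have hzpow : ∀ k : ℕ, ‖(z:ℂ)^k‖ = z^k := by
      intro k; rw [norm_pow, Complex.norm_real, Real.norm_eq_abs, _root_.abs_of_nonneg hz0]
    show ‖A s * (-1:ℂ)^s * (z:ℂ)^s * (qq (a + s) m * (z:ℂ)^m)‖ ≤ _
    simp only [norm_mul, norm_pow, norm_neg, norm_one, one_pow, mul_one, hzpow]
    have hq : ‖qq (a + (s:ℂ)) m‖ ≤ (ascPochhammer ℝ m).eval (‖a‖ + s) / m.factorial := by
      rw [qq, norm_div, Complex.norm_natCast]
      gcongr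
      · apply norm_pc_le
        calc ‖a + (s:ℂ)‖ ≤ ‖a‖ + ‖(s:ℂ)‖ := norm_add_le _ _
          _ = ‖a‖ + s := by rw [Complex.norm_natCast]
    have h0 : 0 ≤ (ascPochhammer ℝ m).eval (‖a‖ + s) / m.factorial :=
      le_trans (norm_nonneg _) hq
    calc ‖A s‖ * z^s * (‖qq (a + (s:ℂ)) m‖ * z^m)
        ≤ ‖A s‖ * z^s * (((ascPochhammer ℝ m).eval (‖a‖ + s) / m.factorial) * z^m) := by
          gcongr
      _ = (‖A s‖ * z^s) * ((ascPochhammer ℝ m).eval (‖a‖ + s) / (m.factorial : ℝ) * z^m) := by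
          ring
  have hcs : ∀ s : ℕ, (c + (s:ℂ)) ≠ 0 := by
    intro s h
    exact hc s (by linear_combination h)
  have hArec : ∀ s : ℕ, A (s+1) = A s * ((a + s) * (c - b + s) / ((c + s) * ((s:ℂ)+1))) := by
    intro s
    have h1 : pc s c ≠ 0 := pc_ne hc s
    have h2 : ((s.factorial:ℂ)) ≠ 0 := Nat.cast_ne_zero.mpr s.factorial_ne_zero
    have h3 : ((s:ℂ)+1) ≠ 0 := by
      have h4 : (((s+1:ℕ)):ℂ) ≠ 0 := Nat.cast_ne_zero.mpr (Nat.succ_ne_zero s)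
      push_cast at h4; exact h4
    simp only [hA]
    rw [pc_succ, pc_succ, pc_succ, Nat.factorial_succ]
    push_cast
    field_simp
  have hAnorm : ∀ s : ℕ, ‖A (s+1)‖
      = ‖A s‖ * (‖a + (s:ℂ)‖ * ‖c - b + (s:ℂ)‖ / (‖c + (s:ℂ)‖ * ((s:ℝ)+1))) := by
    intro s
    have hn1 : ‖(s:ℂ)+1‖ = (s:ℝ)+1 := by
      rw [show (s:ℂ)+1 = (((s+1:ℕ)):ℂ) by push_cast; ring, Complex.norm_natCast]
      push_cast; ring
    rw [hArec s]
    simp only [norm_mul, norm_div]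
    rw [hn1]
  set M : ℕ → ℝ := fun s => (‖A s‖ * z^s) * (1 - z)^(-(‖a‖ + (s:ℝ))) with hM
  have hMsum : Summable M := by
    apply summable_ratio
      (g := fun s => (‖a + (s:ℂ)‖/‖(1:ℂ) + s‖) * (‖c - b + (s:ℂ)‖/‖c + (s:ℂ)‖)
        * (z * (1-z)⁻¹))
      (L := 1 * 1 * (z * (1-z)⁻¹))
      (fun s => by simp only [hM]; positivity)
      (by
        rw [one_mul, one_mul, ← div_eq_mul_inv]
        exact (div_lt_one h1z).mpr (by linarith))
      (((tendsto_norm_ratio a 1).mul (tendsto_norm_ratio (c-b) c)).mul_const _)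
    apply Filter.Eventually.of_forall
    intro s
    apply le_of_eq
    have hn1 : ‖(1:ℂ) + (s:ℂ)‖ = (s:ℝ)+1 := by
      rw [show (1:ℂ)+(s:ℂ) = (((s+1:ℕ)):ℂ) by push_cast; ring, Complex.norm_natCast]
      push_cast; ring
    have hrp : (1 - z)^(-(‖a‖ + ((s:ℝ)+1))) = (1-z)^(-(‖a‖+(s:ℝ))) * (1-z)⁻¹ := by
      rw [show -(‖a‖ + ((s:ℝ)+1)) = -(‖a‖+(s:ℝ)) + (-1) by ring,
        Real.rpow_add h1z, Real.rpow_neg_one]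
    have hcspos : 0 < ‖c + (s:ℂ)‖ := norm_pos_iff.mpr (hcs s)
    have hs1pos : (0:ℝ) < (s:ℝ)+1 := by positivity
    simp only [hM]
    rw [hAnorm s, hn1]
    push_cast
    rw [hrp, pow_succ]
    field_simp
  have hfiber : ∀ s : ℕ, Summable (fun m => ‖T (s, m)‖) := fun s =>
    Summable.of_nonneg_of_le (fun m => norm_nonneg _) (fun m => hTnorm_le s m) (hmaj s)
  have hfiber_tsum_le : ∀ s : ℕ, ∑' m, ‖T (s, m)‖ ≤ M s := by
    intro s
    have hval : (∑' m : ℕ, (‖A s‖ * z^s)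
        * ((ascPochhammer ℝ m).eval (‖a‖ + s) / (m.factorial : ℝ) * z^m)) = M s := by
      rw [tsum_mul_left, (binomial_hasSum_real (‖a‖ + s) hz0 hz34).tsum_eq]
    rw [← hval]
    exact (hfiber s).tsum_le_tsum (fun m => hTnorm_le s m) (hmaj s)
  have hTnorm : Summable (fun p : ℕ×ℕ => ‖T p‖) := by
    rw [summable_prod_of_nonneg (fun p => norm_nonneg _)]
    exact ⟨hfiber, Summable.of_nonneg_of_le
      (fun s => tsum_nonneg fun m => norm_nonneg _) hfiber_tsum_le hMsum⟩
  have hTsum : Summable T := Summable.of_norm hTnorm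
  have hstep1 : (∑' p : ℕ×ℕ, T p)
      = ((1:ℂ) - (z:ℂ)) ^ (-a) * ∑' s, A s * ((z / (z - 1) : ℝ) : ℂ)^s := by
    rw [hTsum.tsum_prod' (fun s => (hClaim1 s).summable)]
    calc (∑' (s : ℕ) (m : ℕ), T (s, m))
        = ∑' s, ((1:ℂ)-(z:ℂ))^(-a) * (A s * ((z / (z - 1) : ℝ) : ℂ)^s) :=
          tsum_congr (fun s => (hClaim1 s).tsum_eq)
      _ = ((1:ℂ) - (z:ℂ)) ^ (-a) * ∑' s, A s * ((z / (z - 1) : ℝ) : ℂ)^s := tsum_mul_left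
  have hstep2 : (∑' p : ℕ×ℕ, T p)
      = ∑' n, pc n a * pc n b / (pc n c * (n.factorial:ℂ)) * (z:ℂ)^n := by
    rw [tsum_eq_tsum_antidiagonal hTsum]
    apply tsum_congr
    intro n
    rw [Finset.Nat.sum_antidiagonal_eq_sum_range_succ (fun k l => T (k, l))]
    have hterm : ∀ s ∈ range (n+1), T (s, n - s)
        = (pc s a * pc s (c-b) / (pc s c * (s.factorial : ℂ)) * (-1:ℂ)^s
            * pc (n-s) (a + s) / (((n-s).factorial : ℂ))) * (z:ℂ)^n := by
      intro s hs
      have hsn : s ≤ n := Nat.lt_succ_iff.mp (Finset.mem_range.mp hs)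
      have hzz : (z:ℂ)^s * (z:ℂ)^(n-s) = (z:ℂ)^n := by
        rw [← pow_add]; congr 1; omega
      show A s * (-1:ℂ)^s * (z:ℂ)^s * (qq (a + s) (n-s) * (z:ℂ)^(n-s)) = _
      simp only [hA, qq]
      rw [← hzz]
      ring
    rw [Finset.sum_congr rfl hterm, ← Finset.sum_mul, coeff_id a b c hc n]
  have main : (∑' s : ℕ, pc s a * pc s b / (pc s c * (s.factorial : ℂ)) * (z : ℂ) ^ s)
      = ((1:ℂ) - (z:ℂ)) ^ (-a)
        * ∑' s, A s * ((z / (z - 1) : ℝ) : ℂ)^s := by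
    rw [← hstep2, hstep1]
  exact main
end
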